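/- Let G be a non-abelian subgroup of SL(2,ℂ) whose natural action on ℂ² is reducible. Then G is unitary if and only if the ℝ-subalgebra A of the 2×2 complex matrices generated by G has real dimension 3; equivalently, if and only if G is conjugate to a (non-abelian) subgroup of the group of real upper-triangular 2×2 matrices of determinant 1. -/

import Mathlib

open Matrix Complex

/-- A subgroup of `SL(2,ℂ)`, viewed as a set of matrices, is *unitary* if it preserves some
nondegenerate Hermitian form `H` under `g ↦ gᴴ H g`. -/
def IsUnitarySubgroup (G : Subgroup (Matrix.SpecialLinearGroup (Fin 2) ℂ)) : Prop :=
  ∃ H : Matrix (Fin 2) (Fin 2) ℂ, H.IsHermitian ∧ H.det ≠ 0 ∧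
    ∀ g ∈ G, (g : Matrix (Fin 2) (Fin 2) ℂ)ᴴ * H * (g : Matrix (Fin 2) (Fin 2) ℂ) = H

/-- The natural action of `G ⊆ SL(2,ℂ)` on `ℂ²` is reducible if there is a nonzero common
eigenvector. -/
def IsReducibleSubgroup (G : Subgroup (Matrix.SpecialLinearGroup (Fin 2) ℂ)) : Prop :=
  ∃ v : Fin 2 → ℂ, v ≠ 0 ∧ ∀ g ∈ G, ∃ c : ℂ, (g : Matrix (Fin 2) (Fin 2) ℂ) *ᵥ v = c • v

section Auxiliary

abbrev M2 := Matrix (Fin 2) (Fin 2) ℂ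
abbrev SL2 := Matrix.SpecialLinearGroup (Fin 2) ℂ

lemma coe_mul_sl (a b : SL2) : (↑(a*b) : M2) = (↑a : M2) * (↑b : M2) := rfl

lemma conj_cancel (P Q : M2) (hPQ : P*Q = 1) (Z : M2) :
    P * (Q * Z * P) * Q = Z := by
  calc P * (Q * Z * P) * Q = (P*Q) * Z * (P*Q) := by
        simp only [Matrix.mul_assoc]
      _ = Z := by rw [hPQ]; simp

lemma conj_mul' (Q P : M2) (hPQ : P*Q = 1) (X Y : M2) :
    Q*(X*Y)*P = (Q*X*P)*(Q*Y*P) := by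
  simp only [Matrix.mul_assoc]
  rw [← Matrix.mul_assoc P Q (Y*P), hPQ, Matrix.one_mul]

lemma conj_inj (P Q : M2) (hPQ : P*Q = 1) (X Y : M2)
    (h : Q*X*P = Q*Y*P) : X = Y := by
  have := congrArg (fun Z => P * Z * Q) h
  simpa only [conj_cancel P Q hPQ] using this

lemma detprod (Q g P : M2) (hdetg : g.det = 1) (hQP : Q*P = 1)
    (h10 : (Q*g*P) 1 0 = 0) : (Q*g*P) 0 0 * (Q*g*P) 1 1 = 1 := by
  have hqp : Q.det * P.det = 1 := by rw [← Matrix.det_mul, hQP, Matrix.det_one]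
  have hd : (Q*g*P).det = 1 := by
    rw [Matrix.det_mul, Matrix.det_mul, hdetg, mul_one, hqp]
  rw [Matrix.det_fin_two, h10] at hd
  linear_combination hd

lemma tri_of_eig (P Q g : M2) (v : Fin 2 → ℂ) (c : ℂ)
    (hQP : Q*P = 1) (h00 : P 0 0 = v 0) (h10 : P 1 0 = v 1)
    (heig : g *ᵥ v = c • v) : (Q*g*P) 1 0 = 0 := by
  have e0 : g 0 0 * v 0 + g 0 1 * v 1 = c * v 0 := by
    simpa [Matrix.mulVec, dotProduct, Fin.sum_univ_two] using congrFun heig 0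
  have e1 : g 1 0 * v 0 + g 1 1 * v 1 = c * v 1 := by
    simpa [Matrix.mulVec, dotProduct, Fin.sum_univ_two] using congrFun heig 1
  have hz : Q 1 0 * P 0 0 + Q 1 1 * P 1 0 = 0 := by
    have := congrFun (congrFun hQP 1) 0
    simpa [Matrix.mul_apply, Fin.sum_univ_two] using this
  have expand : (Q*g*P) 1 0 =
      Q 1 0 * (g 0 0 * P 0 0 + g 0 1 * P 1 0) + Q 1 1 * (g 1 0 * P 0 0 + g 1 1 * P 1 0) := by
    simp [Matrix.mul_apply, Fin.sum_univ_two]; ring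
  rw [expand, h00, h10, e0, e1]
  rw [h00, h10] at hz
  linear_combination c * hz

lemma basechange (v : Fin 2 → ℂ) (hv : v ≠ 0) :
    ∃ P Q : M2, P*Q = 1 ∧ Q*P = 1 ∧ P 0 0 = v 0 ∧ P 1 0 = v 1 := by
  have : v 0 ≠ 0 ∨ v 1 ≠ 0 := by
    by_contra h
    push_neg at h
    exact hv (funext fun i => by fin_cases i <;> simp [h.1, h.2])
  rcases this with h | h
  · refine ⟨!![v 0, 0; v 1, 1], !![(v 0)⁻¹, 0; -(v 1)*(v 0)⁻¹, 1], ?_, ?_, by simp, by simp⟩ <;>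
    · ext i j
      fin_cases i <;> fin_cases j <;>
        simp [Matrix.mul_apply, Fin.sum_univ_two] <;> field_simp <;> ring
  · refine ⟨!![v 0, 1; v 1, 0], !![0, (v 1)⁻¹; 1, -(v 0)*(v 1)⁻¹], ?_, ?_, by simp, by simp⟩ <;>
    · ext i j
      fin_cases i <;> fin_cases j <;>
        simp [Matrix.mul_apply, Fin.sum_univ_two] <;> field_simp <;> ring

/-- conjugating an upper triangular matrix by a unipotent. -/
lemma triU (M : M2) (μ : ℂ) (h10 : M 1 0 = 0) :
    !![1,-μ;0,1] * M * !![1,μ;0,1] =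
      !![M 0 0, M 0 0 * μ + M 0 1 - μ * M 1 1; 0, M 1 1] := by
  ext i j
  fin_cases i <;> fin_cases j <;>
    simp only [Matrix.mul_apply, Fin.sum_univ_two] <;>
    simp [h10] <;> ring

lemma tri_comm (A B : M2) (hA10 : A 1 0 = 0) (hB10 : B 1 0 = 0)
    (hA11 : A 1 1 = A 0 0) (hB11 : B 1 1 = B 0 0) : A * B = B * A := by
  ext i j
  fin_cases i <;> fin_cases j <;>
    simp only [Fin.zero_eta, Fin.mk_one, Matrix.mul_apply, Fin.sum_univ_two,
      hA10, hB10, hA11, hB11] <;> ring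

lemma diag_comm (A B : M2) (hA10 : A 1 0 = 0) (hB10 : B 1 0 = 0)
    (hA01 : A 0 1 = 0) (hB01 : B 0 1 = 0) : A * B = B * A := by
  ext i j
  fin_cases i <;> fin_cases j <;>
    simp only [Fin.zero_eta, Fin.mk_one, Matrix.mul_apply, Fin.sum_univ_two,
      hA10, hB10, hA01, hB01] <;> ring

/-- Normal form for a non-abelian reducible subgroup of SL(2,ℂ). -/
lemma lemA (G : Subgroup SL2)
    (hnab : ¬ ∀ a ∈ G, ∀ b ∈ G, a * b = b * a)
    (hred : IsReducibleSubgroup G) :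
    ∃ P Pinv : M2, P * Pinv = 1 ∧ Pinv * P = 1 ∧
      ∃ lam : ℂ, lam ≠ 0 ∧ lam ^ 2 ≠ 1 ∧
        (∃ g₀ ∈ G, Pinv * (↑g₀ : M2) * P = !![lam, 0; 0, lam⁻¹]) ∧
        (∀ g ∈ G, (Pinv * (↑g : M2) * P) 1 0 = 0 ∧
          (Pinv * (↑g : M2) * P) 0 0 * (Pinv * (↑g : M2) * P) 1 1 = 1) ∧
        (∃ h ∈ G, (Pinv * (↑h : M2) * P) 0 1 ≠ 0) := by
  obtain ⟨v, hv, heig⟩ := hred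
  obtain ⟨P₀, Q₀, hPQ, hQP, h00, h10⟩ := basechange v hv
  have tri0 : ∀ g ∈ G, (Q₀ * (↑g : M2) * P₀) 1 0 = 0 := by
    intro g hg
    obtain ⟨c, hc⟩ := heig g hg
    exact tri_of_eig P₀ Q₀ _ v c hQP h00 h10 hc
  have dp0 : ∀ g ∈ G, (Q₀ * (↑g : M2) * P₀) 0 0 * (Q₀ * (↑g : M2) * P₀) 1 1 = 1 := by
    intro g hg
    exact detprod Q₀ _ P₀ g.2 hQP (tri0 g hg)
  push_neg at hnab
  obtain ⟨a, ha, b, hb, hab⟩ := hnab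
  have habM : (↑a : M2) * (↑b : M2) ≠ (↑b : M2) * (↑a : M2) := fun h => hab (Subtype.ext h)
  have hex : ∃ g₁ ∈ G, ((Q₀ * (↑g₁ : M2) * P₀) 0 0) ^ 2 ≠ 1 := by
    by_contra hcon
    push_neg at hcon
    apply habM
    apply conj_inj P₀ Q₀ hPQ
    rw [conj_mul' Q₀ P₀ hPQ, conj_mul' Q₀ P₀ hPQ]
    have hA11 : (Q₀ * (↑a : M2) * P₀) 1 1 = (Q₀ * (↑a : M2) * P₀) 0 0 := by
      linear_combination (-((Q₀ * (↑a : M2) * P₀) 1 1)) * hcon a ha +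
        ((Q₀ * (↑a : M2) * P₀) 0 0) * dp0 a ha
    have hB11 : (Q₀ * (↑b : M2) * P₀) 1 1 = (Q₀ * (↑b : M2) * P₀) 0 0 := by
      linear_combination (-((Q₀ * (↑b : M2) * P₀) 1 1)) * hcon b hb +
        ((Q₀ * (↑b : M2) * P₀) 0 0) * dp0 b hb
    exact tri_comm _ _ (tri0 a ha) (tri0 b hb) hA11 hB11
  obtain ⟨g₁, hg₁, hl2⟩ := hex
  have hl0 : (Q₀ * (↑g₁ : M2) * P₀) 0 0 ≠ 0 := by
    intro h
    have := dp0 g₁ hg₁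
    rw [h, zero_mul] at this
    exact zero_ne_one this
  have h1l2 : (1 : ℂ) - ((Q₀ * (↑g₁ : M2) * P₀) 0 0) ^ 2 ≠ 0 := by
    intro h
    exact hl2 (by linear_combination -h)
  have hM11 : (Q₀ * (↑g₁ : M2) * P₀) 1 1 = ((Q₀ * (↑g₁ : M2) * P₀) 0 0)⁻¹ :=
    eq_inv_of_mul_eq_one_right (dp0 g₁ hg₁)
  set μ : ℂ := ((Q₀ * (↑g₁ : M2) * P₀) 0 1) * ((Q₀ * (↑g₁ : M2) * P₀) 0 0) /
      (1 - ((Q₀ * (↑g₁ : M2) * P₀) 0 0) ^ 2) with hμ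
  have hPQ' : (P₀ * !![1,μ;0,1]) * (!![1,-μ;0,1] * Q₀) = 1 := by
    calc (P₀ * !![1,μ;0,1]) * (!![1,-μ;0,1] * Q₀)
        = P₀ * (!![1,μ;0,1] * !![1,-μ;0,1]) * Q₀ := by simp only [Matrix.mul_assoc]
      _ = 1 := by
          have : (!![1,μ;0,1] : M2) * !![1,-μ;0,1] = 1 := by
            ext i j; fin_cases i <;> fin_cases j <;>
              simp [Matrix.mul_apply, Fin.sum_univ_two]
          rw [this, Matrix.mul_one, hPQ]
  have hQP' : (!![1,-μ;0,1] * Q₀) * (P₀ * !![1,μ;0,1]) = 1 := by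
    calc (!![1,-μ;0,1] * Q₀) * (P₀ * !![1,μ;0,1])
        = !![1,-μ;0,1] * (Q₀ * P₀) * !![1,μ;0,1] := by simp only [Matrix.mul_assoc]
      _ = 1 := by
          rw [hQP, Matrix.mul_one]
          ext i j; fin_cases i <;> fin_cases j <;>
            simp [Matrix.mul_apply, Fin.sum_univ_two]
  have hMkey : ∀ g : M2, !![1,-μ;0,1] * Q₀ * g * (P₀ * !![1,μ;0,1]) =
      !![1,-μ;0,1] * (Q₀ * g * P₀) * !![1,μ;0,1] := by
    intro g; simp only [Matrix.mul_assoc]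
  refine ⟨P₀ * !![1,μ;0,1], !![1,-μ;0,1] * Q₀, hPQ', hQP',
    (Q₀ * (↑g₁ : M2) * P₀) 0 0, hl0, hl2, ⟨g₁, hg₁, ?_⟩, ?_, ?_⟩
  · rw [hMkey, triU _ μ (tri0 g₁ hg₁)]
    have e1 : (Q₀ * (↑g₁ : M2) * P₀) 0 0 * μ + (Q₀ * (↑g₁ : M2) * P₀) 0 1
        - μ * (Q₀ * (↑g₁ : M2) * P₀) 1 1 = 0 := by
      rw [hM11, hμ]
      field_simp
      ring
    rw [e1, hM11]
  · intro g hg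
    rw [hMkey, triU _ μ (tri0 g hg)]
    refine ⟨by simp, ?_⟩
    have e00 : (!![(Q₀ * (↑g : M2) * P₀) 0 0,
        (Q₀ * (↑g : M2) * P₀) 0 0 * μ + (Q₀ * (↑g : M2) * P₀) 0 1 - μ * (Q₀ * (↑g : M2) * P₀) 1 1;
        0, (Q₀ * (↑g : M2) * P₀) 1 1] : M2) 0 0 = (Q₀ * (↑g : M2) * P₀) 0 0 := by simp
    have e11 : (!![(Q₀ * (↑g : M2) * P₀) 0 0,
        (Q₀ * (↑g : M2) * P₀) 0 0 * μ + (Q₀ * (↑g : M2) * P₀) 0 1 - μ * (Q₀ * (↑g : M2) * P₀) 1 1;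
        0, (Q₀ * (↑g : M2) * P₀) 1 1] : M2) 1 1 = (Q₀ * (↑g : M2) * P₀) 1 1 := by simp
    rw [e00, e11]
    exact dp0 g hg
  · by_contra hcon
    push_neg at hcon
    apply habM
    apply conj_inj (P₀ * !![1,μ;0,1]) (!![1,-μ;0,1] * Q₀) hPQ'
    rw [conj_mul' _ _ hPQ', conj_mul' _ _ hPQ']
    have hconA := hcon a ha
    have hconB := hcon b hb
    rw [hMkey, triU _ μ (tri0 a ha)] at hconA ⊢
    rw [hMkey, triU _ μ (tri0 b hb)] at hconB ⊢
    simp only [Matrix.cons_val_zero, Matrix.cons_val_one, Matrix.head_cons, Matrix.of_apply,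
      Matrix.cons_val'] at hconA hconB
    rw [hconA, hconB]
    exact diag_comm _ _ (by simp) (by simp) (by simp) (by simp)

lemma MKM (M : M2) (him : ∀ i j, (M i j).im = 0) (h10 : M 1 0 = 0)
    (hd : M 0 0 * M 1 1 = 1) :
    Mᴴ * !![(0:ℂ), I; -I, 0] * M = !![(0:ℂ), I; -I, 0] := by
  have hc : ∀ i j, star (M i j) = M i j := fun i j => by
    rw [Complex.star_def]; exact Complex.conj_eq_iff_im.mpr (him i j)
  ext i j
  fin_cases i <;> fin_cases j <;>
    simp only [Fin.zero_eta, Fin.mk_one, Matrix.mul_apply, Matrix.conjTranspose_apply,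
      Fin.sum_univ_two, hc, h10, Matrix.cons_val', Matrix.cons_val_zero, Matrix.cons_val_one,
      Matrix.head_cons, Matrix.head_fin_const, Matrix.empty_val', Matrix.cons_val_fin_one,
      Matrix.of_apply]
  · ring
  · linear_combination I * hd
  · linear_combination (-I) * hd
  · ring

lemma RtoP (G : Subgroup SL2)
    (hR : ∃ T : M2, IsUnit T.det ∧ ∀ g ∈ G,
      (∀ i j, ((T⁻¹ * (↑g : M2) * T) i j).im = 0) ∧ (T⁻¹ * (↑g : M2) * T) 1 0 = 0 ∧
      (T⁻¹ * (↑g : M2) * T).det = 1) : IsUnitarySubgroup G := by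
  obtain ⟨T, hT, hg⟩ := hR
  have hT1 : T * T⁻¹ = 1 := Matrix.mul_nonsing_inv T hT
  have hT2 : T⁻¹ * T = 1 := Matrix.nonsing_inv_mul T hT
  set K : M2 := !![(0:ℂ), I; -I, 0] with hK
  refine ⟨(T⁻¹)ᴴ * K * T⁻¹, ?_, ?_, ?_⟩
  · show ((T⁻¹)ᴴ * K * T⁻¹)ᴴ = (T⁻¹)ᴴ * K * T⁻¹
    have hKH : Kᴴ = K := by
      ext i j; fin_cases i <;> fin_cases j <;>
        simp [hK, Matrix.conjTranspose_apply]
    rw [Matrix.conjTranspose_mul, Matrix.conjTranspose_mul, hKH,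
      Matrix.conjTranspose_conjTranspose]
    simp only [Matrix.mul_assoc]
  · have hdetTinv : (T⁻¹).det ≠ 0 := by
      intro h
      have := congrArg Matrix.det hT2
      rw [Matrix.det_mul, h, zero_mul, Matrix.det_one] at this
      exact zero_ne_one this
    have hdK : K.det = -1 := by
      rw [hK, Matrix.det_fin_two]
      simp [Complex.I_mul_I]
    rw [Matrix.det_mul, Matrix.det_mul, Matrix.det_conjTranspose, hdK]
    intro h
    rcases mul_eq_zero.mp h with h' | h'
    · rcases mul_eq_zero.mp h' with h'' | h''
      · exact hdetTinv (by simpa using h'')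
      · norm_num at h''
    · exact hdetTinv h'
  · intro g hgG
    obtain ⟨him, h10, hdet⟩ := hg g hgG
    have hd : (T⁻¹ * (↑g : M2) * T) 0 0 * (T⁻¹ * (↑g : M2) * T) 1 1 = 1 := by
      rw [Matrix.det_fin_two, h10] at hdet
      linear_combination hdet
    have hMKM := MKM _ him h10 hd
    have hgdec : (↑g : M2) = T * (T⁻¹ * (↑g : M2) * T) * T⁻¹ :=
      (conj_cancel T T⁻¹ hT1 _).symm
    rw [hgdec]
    generalize hMg : T⁻¹ * (↑g : M2) * T = M at hMKM ⊢
    have e1 : Tᴴ * (T⁻¹)ᴴ = 1 := by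
      rw [← Matrix.conjTranspose_mul, hT2, Matrix.conjTranspose_one]
    simp only [Matrix.conjTranspose_mul, Matrix.mul_assoc]
    rw [← Matrix.mul_assoc T⁻¹ T, hT2, Matrix.one_mul]
    rw [← Matrix.mul_assoc Tᴴ ((T⁻¹)ᴴ), e1, Matrix.one_mul]
    congr 1
    calc Mᴴ * (K * (M * T⁻¹))
        = (Mᴴ * K * M) * T⁻¹ := by
          simp only [Matrix.mul_assoc]
      _ = K * T⁻¹ := by rw [← hK] at hMKM; rw [hMKM]

lemma sandwich_entry (N Hm M : M2) (h : Nᴴ * Hm * M = Hm) (i j : Fin 2) :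
    star (N 0 i) * (Hm 0 0 * M 0 j + Hm 0 1 * M 1 j) +
      star (N 1 i) * (Hm 1 0 * M 0 j + Hm 1 1 * M 1 j) = Hm i j := by
  have := congrFun (congrFun h i) j
  simp only [Matrix.mul_apply, Matrix.conjTranspose_apply, Fin.sum_univ_two] at this
  linear_combination this

lemma diagConj (c : ℂ) (hc : c ≠ 0) (M : M2) :
    !![c⁻¹,0;0,1] * M * !![c,0;0,1] = !![M 0 0, c⁻¹ * M 0 1; c * M 1 0, M 1 1] := by
  ext i j
  fin_cases i <;> fin_cases j <;>
    simp only [Fin.zero_eta, Fin.mk_one, Matrix.mul_apply, Fin.sum_univ_two,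
      Matrix.cons_val', Matrix.cons_val_zero, Matrix.cons_val_one,
      Matrix.head_cons, Matrix.head_fin_const, Matrix.empty_val',
      Matrix.cons_val_fin_one, Matrix.of_apply]
  · field_simp
    ring
  · ring
  · ring
  · ring

lemma PtoR (G : Subgroup SL2) (P Pinv : M2) (hPPinv : P * Pinv = 1) (hPinvP : Pinv * P = 1)
    (lam : ℂ) (hl0 : lam ≠ 0) (hl2 : lam^2 ≠ 1)
    (g₀ : SL2) (hg₀G : g₀ ∈ G) (hg₀ : Pinv * (↑g₀ : M2) * P = !![lam,0;0,lam⁻¹])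
    (htri : ∀ g ∈ G, (Pinv * (↑g : M2) * P) 1 0 = 0 ∧
      (Pinv * (↑g : M2) * P) 0 0 * (Pinv * (↑g : M2) * P) 1 1 = 1)
    (hex : ∃ h ∈ G, (Pinv * (↑h : M2) * P) 0 1 ≠ 0)
    (hU : IsUnitarySubgroup G) :
    ∃ T : M2, IsUnit T.det ∧ ∀ g ∈ G,
      (∀ i j, ((T⁻¹ * (↑g : M2) * T) i j).im = 0) ∧ (T⁻¹ * (↑g : M2) * T) 1 0 = 0 ∧
      (T⁻¹ * (↑g : M2) * T).det = 1 := by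
  obtain ⟨H, hHerm, hHdet, hHinv⟩ := hU
  set H' : M2 := Pᴴ * H * P with hH'
  have e2 : Pinvᴴ * Pᴴ = 1 := by
    rw [← Matrix.conjTranspose_mul, hPPinv, Matrix.conjTranspose_one]
  have hH'inv : ∀ g ∈ G, (Pinv * (↑g : M2) * P)ᴴ * H' * (Pinv * (↑g : M2) * P) = H' := by
    intro g hg
    rw [hH']
    simp only [Matrix.conjTranspose_mul, Matrix.mul_assoc]
    rw [← Matrix.mul_assoc Pinvᴴ Pᴴ, e2, Matrix.one_mul]
    rw [← Matrix.mul_assoc P Pinv, hPPinv, Matrix.one_mul]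
    congr 1
    calc (↑g : M2)ᴴ * (H * ((↑g : M2) * P)) = ((↑g : M2)ᴴ * H * (↑g : M2)) * P := by
          simp only [Matrix.mul_assoc]
      _ = H * P := by rw [hHinv g hg]
  have hH'herm : H'ᴴ = H' := by
    rw [hH']
    simp only [Matrix.conjTranspose_mul, Matrix.conjTranspose_conjTranspose]
    rw [hHerm.eq]
    simp only [Matrix.mul_assoc]
  have hH'det : H'.det ≠ 0 := by
    have hdP : P.det ≠ 0 := by
      intro h
      have := congrArg Matrix.det hPPinv
      rw [Matrix.det_mul, h, zero_mul, Matrix.det_one] at this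
      exact zero_ne_one this
    rw [hH', Matrix.det_mul, Matrix.det_mul, Matrix.det_conjTranspose]
    intro h
    rcases mul_eq_zero.mp h with h' | h'
    · rcases mul_eq_zero.mp h' with h'' | h''
      · exact hdP (by simpa using h'')
      · exact hHdet h''
    · exact hdP h'
  have hH10 : H' 1 0 = (starRingEnd ℂ) (H' 0 1) := by
    have := congrFun (congrFun hH'herm 1) 0
    simp only [Matrix.conjTranspose_apply, Complex.star_def] at this
    exact this.symm
  have hD := hH'inv g₀ hg₀G
  rw [hg₀] at hD
  have eD00 := sandwich_entry _ _ _ hD 0 0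
  have eD01 := sandwich_entry _ _ _ hD 0 1
  have eD11 := sandwich_entry _ _ _ hD 1 1
  simp only [Matrix.cons_val', Matrix.cons_val_zero, Matrix.cons_val_one, Matrix.head_cons,
    Matrix.head_fin_const, Matrix.empty_val', Matrix.cons_val_fin_one, Matrix.of_apply,
    star_zero, mul_zero, zero_mul, add_zero, zero_add, mul_one, Complex.star_def]
    at eD00 eD01 eD11
  -- eD00 : star lam * (H' 0 0 * lam) = H' 0 0
  -- eD01 : star lam * (H' 0 1 * lam⁻¹) = H' 0 1
  -- eD11 : star lam⁻¹ * (H' 1 1 * lam⁻¹) = H' 1 1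
  by_cases hcc : (starRingEnd ℂ) lam * lam = 1
  · -- |lam| = 1 : contradiction with hex
    exfalso
    have hclam : (starRingEnd ℂ) lam ≠ lam := by
      intro h
      apply hl2
      rw [pow_two]
      nth_rewrite 1 [← h]
      exact hcc
    have hH01 : H' 0 1 = 0 := by
      have h3 : H' 0 1 * ((starRingEnd ℂ) lam - lam) = 0 := by
        have h4 := congrArg (fun z => z * lam) eD01
        field_simp at h4
        linear_combination h4
      rcases mul_eq_zero.mp h3 with h | h
      · exact h
      · exact absurd (by linear_combination h) hclam
    have hH10' : H' 1 0 = 0 := by rw [hH10, hH01, map_zero]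
    have hH00ne : H' 0 0 ≠ 0 := by
      intro h
      apply hH'det
      rw [Matrix.det_fin_two, h, hH01, hH10']
      ring
    obtain ⟨h, hhG, hb⟩ := hex
    have hMinv := hH'inv h hhG
    have e01 := sandwich_entry _ _ _ hMinv 0 1
    simp only [(htri h hhG).1, hH01, hH10', mul_zero, zero_mul, add_zero, zero_add,
      star_zero, Complex.star_def] at e01
    -- e01 : star (M 0 0) * (H' 0 0 * M 0 1) = 0
    have ha0 : (Pinv * (↑h : M2) * P) 0 0 ≠ 0 := by
      intro hz
      have := (htri h hhG).2
      rw [hz, zero_mul] at this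
      exact zero_ne_one this
    rcases mul_eq_zero.mp e01 with hz | hz
    · exact (star_ne_zero.mpr ha0) (by rw [Complex.star_def]; exact hz)
    · rcases mul_eq_zero.mp hz with hz' | hz'
      · exact hH00ne hz'
      · exact hb hz'
  · -- |lam| ≠ 1 : construct T
    have hH00 : H' 0 0 = 0 := by
      have h3 : H' 0 0 * ((starRingEnd ℂ) lam * lam - 1) = 0 := by
        linear_combination eD00
      rcases mul_eq_zero.mp h3 with h | h
      · exact h
      · exact absurd (by linear_combination h) hcc
    have hH11 : H' 1 1 = 0 := by
      have hcl0 : (starRingEnd ℂ) lam ≠ 0 := by simpa using hl0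
      have h4 := eD11
      rw [map_inv₀] at h4
      field_simp [hl0, hcl0] at h4
      have h3 : H' 1 1 * ((starRingEnd ℂ) lam * lam - 1) = 0 := by
        linear_combination -h4
      rcases mul_eq_zero.mp h3 with h | h
      · exact h
      · exact absurd (by linear_combination h) hcc
    set hh : ℂ := H' 0 1 with hhdef
    have hhne : hh ≠ 0 := by
      intro h
      apply hH'det
      rw [Matrix.det_fin_two, hH00, hH11, hH10, ← hhdef, h]
      simp
    have hIh : I * hh ≠ 0 := mul_ne_zero I_ne_zero hhne
    refine ⟨P * !![I*hh, 0; 0, 1], ?_, ?_⟩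
    · have hdP : IsUnit P.det := by
        apply IsUnit.of_mul_eq_one Pinv.det
        rw [← Matrix.det_mul, hPPinv, Matrix.det_one]
      rw [Matrix.det_mul]
      apply hdP.mul
      rw [Matrix.det_fin_two_of]
      simpa using hIh
    · intro g hg
      -- identify the inverse
      have hTinv : (P * !![I*hh, 0; 0, 1])⁻¹ = !![(I*hh)⁻¹, 0; 0, 1] * Pinv := by
        apply Matrix.inv_eq_right_inv
        calc P * !![I*hh, 0; 0, 1] * (!![(I*hh)⁻¹, 0; 0, 1] * Pinv)
            = P * (!![I*hh, 0; 0, 1] * !![(I*hh)⁻¹, 0; 0, 1]) * Pinv := by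
              simp only [Matrix.mul_assoc]
          _ = 1 := by
              have : (!![I*hh, 0; 0, 1] : M2) * !![(I*hh)⁻¹, 0; 0, 1] = 1 := by
                ext i j
                fin_cases i <;> fin_cases j <;>
                  simp [Matrix.mul_apply, Fin.sum_univ_two, Complex.inv_I] <;>
                  field_simp [hhne] <;> linear_combination (-1) * Complex.I_mul_I
              rw [this, Matrix.mul_one, hPPinv]
      have hkey : (P * !![I*hh, 0; 0, 1])⁻¹ * (↑g : M2) * (P * !![I*hh, 0; 0, 1]) =
          !![(I*hh)⁻¹, 0; 0, 1] * (Pinv * (↑g : M2) * P) * !![I*hh, 0; 0, 1] := by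
        rw [hTinv]
        simp only [Matrix.mul_assoc]
      rw [hkey, diagConj (I*hh) hIh]
      obtain ⟨h10, hdp⟩ := htri g hg
      rw [h10, mul_zero]
      -- facts about entries
      have hMinv := hH'inv g hg
      have e01 := sandwich_entry _ _ _ hMinv 0 1
      have e11 := sandwich_entry _ _ _ hMinv 1 1
      simp only [h10, hH00, hH11, hH10, ← hhdef, mul_zero, zero_mul, add_zero, zero_add,
        star_zero, mul_one, Complex.star_def] at e01 e11
      -- e01 : star (M 0 0) * (hh * M 1 1) = hh
      -- e11 : star (M 0 1) * (hh * M 1 1) + star (M 1 1) * (star hh * M 0 1) = 0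
      have hd0 : (Pinv * (↑g : M2) * P) 1 1 ≠ 0 := by
        intro hz
        rw [hz, mul_zero] at hdp
        exact zero_ne_one hdp
      have ha0 : (Pinv * (↑g : M2) * P) 0 0 ≠ 0 := by
        intro hz
        rw [hz, zero_mul] at hdp
        exact zero_ne_one hdp
      have hastar : (starRingEnd ℂ) ((Pinv * (↑g : M2) * P) 0 0) = (Pinv * (↑g : M2) * P) 0 0 := by
        have h5 : (starRingEnd ℂ) ((Pinv * (↑g : M2) * P) 0 0) * (Pinv * (↑g : M2) * P) 1 1 = 1 := by
          have h6 : ((starRingEnd ℂ) ((Pinv * (↑g : M2) * P) 0 0) * (Pinv * (↑g : M2) * P) 1 1 - 1) * hh = 0 := by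
            linear_combination e01
          rcases mul_eq_zero.mp h6 with h | h
          · linear_combination h
          · exact absurd h hhne
        apply mul_right_cancel₀ hd0
        rw [h5, hdp]
      have hdstar : (starRingEnd ℂ) ((Pinv * (↑g : M2) * P) 1 1) = (Pinv * (↑g : M2) * P) 1 1 := by
        apply mul_left_cancel₀ ha0
        have h8 := congrArg (starRingEnd ℂ) hdp
        rw [_root_.map_mul, _root_.map_one, hastar] at h8
        rw [h8, hdp]
      -- real of (I*hh)⁻¹ * b
      have hwstar : (starRingEnd ℂ) ((I*hh)⁻¹ * (Pinv * (↑g : M2) * P) 0 1) =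
          (I*hh)⁻¹ * (Pinv * (↑g : M2) * P) 0 1 := by
        have hE2 : (starRingEnd ℂ) ((Pinv * (↑g : M2) * P) 0 1) * hh +
            (starRingEnd ℂ) hh * (Pinv * (↑g : M2) * P) 0 1 = 0 := by
          have h7 : ((starRingEnd ℂ) ((Pinv * (↑g : M2) * P) 0 1) * hh +
              (starRingEnd ℂ) hh * (Pinv * (↑g : M2) * P) 0 1) *
                (Pinv * (↑g : M2) * P) 1 1 = 0 := by
            linear_combination e11 -
              ((starRingEnd ℂ) hh * (Pinv * (↑g : M2) * P) 0 1) * hdstar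
          rcases mul_eq_zero.mp h7 with h | h
          · exact h
          · exact absurd h hd0
        rw [_root_.map_mul, map_inv₀, _root_.map_mul, Complex.conj_I]
        have hconjh : (starRingEnd ℂ) hh ≠ 0 := by
          simpa using hhne
        have hstarIh : (-I * (starRingEnd ℂ) hh) ≠ 0 := by
          apply mul_ne_zero
          · simpa using I_ne_zero
          · exact hconjh
        field_simp
        linear_combination (-1) * hE2
      refine ⟨?_, rfl, ?_⟩
      · intro i j
        fin_cases i <;> fin_cases j <;>
          simp only [Fin.zero_eta, Fin.mk_one, Matrix.cons_val', Matrix.cons_val_zero,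
            Matrix.cons_val_one, Matrix.head_cons, Matrix.head_fin_const, Matrix.empty_val',
            Matrix.cons_val_fin_one, Matrix.of_apply]
        · exact Complex.conj_eq_iff_im.mp hastar
        · exact Complex.conj_eq_iff_im.mp hwstar
        · simp
        · exact Complex.conj_eq_iff_im.mp hdstar
      · rw [Matrix.det_fin_two_of]
        rw [hdp]
        ring

lemma linind_one_ab (a b : M2) (hab : a * b ≠ b * a) :
    LinearIndependent ℝ ![(1:M2), a, b] := by
  rw [Fintype.linearIndependent_iff]
  intro r hr
  rw [Fin.sum_univ_three] at hr
  simp only [Matrix.cons_val_zero, Matrix.cons_val_one, Matrix.head_cons,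
    Matrix.cons_val_two, Matrix.tail_cons] at hr
  have habsub : a * b - b * a ≠ 0 := sub_ne_zero.mpr hab
  have h2 : r 2 = 0 := by
    have key : r 2 • (a * b - b * a) = 0 := by
      have h := congrArg (fun X => a * X - X * a) hr
      simp only [Matrix.mul_add, Matrix.add_mul, Matrix.mul_smul, Matrix.smul_mul,
        Matrix.mul_one, Matrix.one_mul, Matrix.mul_zero, Matrix.zero_mul, sub_zero] at h
      rw [smul_sub]
      linear_combination (norm := module) h
    rcases smul_eq_zero.mp key with h | h
    · exact h
    · exact absurd h habsub
  rw [h2, zero_smul, add_zero] at hr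
  have h1 : r 1 = 0 := by
    have key : r 1 • (b * a - a * b) = 0 := by
      have h := congrArg (fun X => b * X - X * b) hr
      simp only [Matrix.mul_add, Matrix.add_mul, Matrix.mul_smul, Matrix.smul_mul,
        Matrix.mul_one, Matrix.one_mul, Matrix.mul_zero, Matrix.zero_mul, sub_zero] at h
      rw [smul_sub]
      linear_combination (norm := module) h
    rcases smul_eq_zero.mp key with h | h
    · exact h
    · exact absurd h (sub_ne_zero.mpr (Ne.symm hab))
  rw [h1, zero_smul, add_zero] at hr
  have h0 : r 0 = 0 := by
    rcases smul_eq_zero.mp hr with h | h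
    · exact h
    · exact absurd h one_ne_zero
  intro i
  fin_cases i <;> assumption

lemma dim_ge (G : Subgroup SL2)
    (hnab : ¬ ∀ a ∈ G, ∀ b ∈ G, a * b = b * a) :
    3 ≤ Module.finrank ℝ
      (Algebra.adjoin ℝ ((fun g : SL2 => (g : M2)) '' (G : Set SL2))) := by
  push_neg at hnab
  obtain ⟨a, ha, b, hb, hab⟩ := hnab
  have habM : (↑a : M2) * (↑b : M2) ≠ (↑b : M2) * (↑a : M2) := fun h => hab (Subtype.ext h)
  set A := Algebra.adjoin ℝ ((fun g : SL2 => (g : M2)) '' (G : Set SL2)) with hA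
  have haA : (↑a : M2) ∈ A := Algebra.subset_adjoin ⟨a, ha, rfl⟩
  have hbA : (↑b : M2) ∈ A := Algebra.subset_adjoin ⟨b, hb, rfl⟩
  set v : Fin 3 → A := ![1, ⟨_, haA⟩, ⟨_, hbA⟩] with hv
  have hli : LinearIndependent ℝ v := by
    have hcomp : (A.val.toLinearMap) ∘ v = ![(1:M2), ↑a, ↑b] := by
      funext i
      fin_cases i <;> simp [hv]
    have := linind_one_ab (↑a) (↑b) habM
    rw [← hcomp] at this
    exact LinearIndependent.of_comp _ this
  have := hli.fintype_card_le_finrank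
  simpa using this

noncomputable def Bsub (T : M2) (hT1 : T * T⁻¹ = 1) (hT2 : T⁻¹ * T = 1) : Subalgebra ℝ M2 :=
  { carrier := {M : M2 | (T⁻¹ * M * T) 1 0 = 0 ∧ ∀ i j, ((T⁻¹ * M * T) i j).im = 0}
    mul_mem' := by
      rintro X Y ⟨hX10, hXim⟩ ⟨hY10, hYim⟩
      have key : T⁻¹ * (X * Y) * T = (T⁻¹ * X * T) * (T⁻¹ * Y * T) :=
        conj_mul' T⁻¹ T hT1 X Y
      constructor
      · rw [key]
        rw [Matrix.mul_apply, Fin.sum_univ_two, hX10]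
        rw [show ((T⁻¹ * Y * T) 1 0) = 0 from hY10]
        ring
      · intro i j
        rw [key, Matrix.mul_apply, Fin.sum_univ_two]
        rw [Complex.add_im, Complex.mul_im, Complex.mul_im]
        rw [hXim i 0, hXim i 1, hYim 0 j, hYim 1 j]
        ring
    one_mem' := by
      constructor
      · rw [Matrix.mul_one, hT2]
        simp
      · intro i j
        rw [Matrix.mul_one, hT2]
        fin_cases i <;> fin_cases j <;> simp
    add_mem' := by
      rintro X Y ⟨hX10, hXim⟩ ⟨hY10, hYim⟩
      have key : T⁻¹ * (X + Y) * T = (T⁻¹ * X * T) + (T⁻¹ * Y * T) := by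
        rw [Matrix.mul_add, Matrix.add_mul]
      constructor
      · rw [key, Matrix.add_apply, hX10, hY10, add_zero]
      · intro i j
        rw [key, Matrix.add_apply, Complex.add_im, hXim i j, hYim i j, add_zero]
    zero_mem' := by
      constructor
      · rw [Matrix.mul_zero, Matrix.zero_mul]
        simp
      · intro i j
        rw [Matrix.mul_zero, Matrix.zero_mul]
        simp
    algebraMap_mem' := by
      intro r
      have h1 : algebraMap ℝ M2 r = (r : ℂ) • (1 : M2) := by
        rw [Algebra.algebraMap_eq_smul_one]
        norm_num
      have key : T⁻¹ * ((r:ℂ) • (1:M2)) * T = (r:ℂ) • (1:M2) := by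
        rw [Matrix.mul_smul, Matrix.smul_mul, Matrix.mul_one, hT2]
      constructor
      · show (T⁻¹ * (algebraMap ℝ M2 r) * T) 1 0 = 0
        rw [h1, key]
        simp
      · intro i j
        show ((T⁻¹ * (algebraMap ℝ M2 r) * T) i j).im = 0
        rw [h1, key]
        fin_cases i <;> fin_cases j <;>
          simp [Matrix.smul_apply, Complex.real_smul] }

lemma dim_le (G : Subgroup SL2)
    (hR : ∃ T : M2, IsUnit T.det ∧ ∀ g ∈ G,
      (∀ i j, ((T⁻¹ * (↑g : M2) * T) i j).im = 0) ∧ (T⁻¹ * (↑g : M2) * T) 1 0 = 0 ∧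
      (T⁻¹ * (↑g : M2) * T).det = 1) :
    Module.finrank ℝ
      (Algebra.adjoin ℝ ((fun g : SL2 => (g : M2)) '' (G : Set SL2))) ≤ 3 := by
  obtain ⟨T, hT, hprop⟩ := hR
  have hT1 : T * T⁻¹ = 1 := Matrix.mul_nonsing_inv T hT
  have hT2 : T⁻¹ * T = 1 := Matrix.nonsing_inv_mul T hT
  have hB := (rfl : Bsub T hT1 hT2 = Bsub T hT1 hT2)
  set B : Subalgebra ℝ M2 := Bsub T hT1 hT2
  have hle : Algebra.adjoin ℝ ((fun g : SL2 => (g : M2)) '' (G : Set SL2)) ≤ B := by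
    apply Algebra.adjoin_le
    rintro x ⟨g, hg, rfl⟩
    obtain ⟨him, h10, _⟩ := hprop g hg
    exact ⟨h10, him⟩
  have h1 := Submodule.finrank_mono (show Subalgebra.toSubmodule
      (Algebra.adjoin ℝ ((fun g : SL2 => (g : M2)) '' (G : Set SL2))) ≤
      Subalgebra.toSubmodule B from hle)
  refine le_trans h1 ?_
  -- injective linear map B → ℝ³
  set f : B →ₗ[ℝ] (Fin 3 → ℝ) :=
    { toFun := fun M => ![((T⁻¹ * (↑M : M2) * T) 0 0).re, ((T⁻¹ * (↑M : M2) * T) 0 1).re,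
        ((T⁻¹ * (↑M : M2) * T) 1 1).re]
      map_add' := by
        intro X Y
        have key : T⁻¹ * ((↑X : M2) + ↑Y) * T = (T⁻¹ * ↑X * T) + (T⁻¹ * ↑Y * T) := by
          rw [Matrix.mul_add, Matrix.add_mul]
        funext i
        fin_cases i <;>
          simp [key, Matrix.add_apply, Complex.add_re]
      map_smul' := by
        intro r X
        have key : T⁻¹ * ((r • X : B) : M2) * T = (r:ℂ) • (T⁻¹ * (↑X : M2) * T) := by
          have : ((r • X : B) : M2) = (r:ℂ) • (↑X : M2) := by
            simp [Complex.real_smul]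
          rw [this, Matrix.mul_smul, Matrix.smul_mul]
        funext i
        fin_cases i <;>
          simp [key, Matrix.smul_apply, Complex.real_smul, Complex.mul_re] } with hf
  have hinj : Function.Injective f := by
    rw [← LinearMap.ker_eq_bot]
    rw [LinearMap.ker_eq_bot']
    intro M hM
    obtain ⟨h10, him⟩ := M.2
    have hentry : ∀ i j, (T⁻¹ * (↑M : M2) * T) i j = 0 := by
      have e0 := congrFun hM 0
      have e1 := congrFun hM 1
      have e2 := congrFun hM 2
      simp only [hf, LinearMap.coe_mk, AddHom.coe_mk, Pi.zero_apply,
        Matrix.cons_val_zero, Matrix.cons_val_one, Matrix.head_cons,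
        Matrix.cons_val_two, Matrix.tail_cons] at e0 e1 e2
      have hre : ∀ i j, ((T⁻¹ * (↑M : M2) * T) i j).re = 0 := by
        intro i j
        fin_cases i <;> fin_cases j
        · simpa using e0
        · simpa using e1
        · simpa using congrArg Complex.re h10
        · simpa using e2
      intro i j
      exact Complex.ext (by simpa using hre i j) (by simpa using him i j)
    have hzero : T⁻¹ * (↑M : M2) * T = 0 := by
      ext i j
      rw [Matrix.zero_apply]
      exact hentry i j
    have : (↑M : M2) = 0 := by
      have := congrArg (fun Z => T * Z * T⁻¹) hzero
      rw [conj_cancel T T⁻¹ hT1] at this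
      rw [this]
      rw [Matrix.mul_zero, Matrix.zero_mul]
    exact Subtype.ext this
  have := LinearMap.finrank_le_finrank_of_injective hinj
  simpa using this

lemma commD (lam : ℂ) (M : M2) (h10 : M 1 0 = 0) :
    !![lam,0;0,lam⁻¹] * M - M * !![lam,0;0,lam⁻¹] =
      !![0, (lam - lam⁻¹) * M 0 1; 0, 0] := by
  ext i j
  fin_cases i <;> fin_cases j <;>
    simp only [Fin.zero_eta, Fin.mk_one, Matrix.sub_apply, Matrix.mul_apply,
      Fin.sum_univ_two, Matrix.cons_val', Matrix.cons_val_zero, Matrix.cons_val_one,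
      Matrix.head_cons, Matrix.head_fin_const, Matrix.empty_val',
      Matrix.cons_val_fin_one, Matrix.of_apply, h10] <;> ring

/-- the conjugation linear map -/
noncomputable def conjL (P Pinv : M2) : M2 →ₗ[ℝ] M2 where
  toFun := fun X => Pinv * X * P
  map_add' := by
    intro X Y
    show Pinv * (X + Y) * P = Pinv * X * P + Pinv * Y * P
    rw [Matrix.mul_add, Matrix.add_mul]
  map_smul' := by
    intro r X
    show Pinv * (r • X) * P = r • (Pinv * X * P)
    rw [Matrix.mul_smul, Matrix.smul_mul]

lemma QtoR (G : Subgroup SL2) (P Pinv : M2) (hPPinv : P * Pinv = 1) (hPinvP : Pinv * P = 1)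
    (lam : ℂ) (hl0 : lam ≠ 0) (hl2 : lam^2 ≠ 1)
    (g₀ : SL2) (hg₀G : g₀ ∈ G) (hg₀ : Pinv * (↑g₀ : M2) * P = !![lam,0;0,lam⁻¹])
    (htri : ∀ g ∈ G, (Pinv * (↑g : M2) * P) 1 0 = 0 ∧
      (Pinv * (↑g : M2) * P) 0 0 * (Pinv * (↑g : M2) * P) 1 1 = 1)
    (hex : ∃ h ∈ G, (Pinv * (↑h : M2) * P) 0 1 ≠ 0)
    (hQ : Module.finrank ℝ
      (Algebra.adjoin ℝ ((fun g : SL2 => (g : M2)) '' (G : Set SL2))) = 3) :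
    ∃ T : M2, IsUnit T.det ∧ ∀ g ∈ G,
      (∀ i j, ((T⁻¹ * (↑g : M2) * T) i j).im = 0) ∧ (T⁻¹ * (↑g : M2) * T) 1 0 = 0 ∧
      (T⁻¹ * (↑g : M2) * T).det = 1 := by
  obtain ⟨h, hhG, hb⟩ := hex
  set A := Algebra.adjoin ℝ ((fun g : SL2 => (g : M2)) '' (G : Set SL2)) with hA
  set x : M2 := (↑g₀ : M2) with hx
  set y : M2 := (↑h : M2) with hy
  set n : M2 := x * y - y * x with hn
  have hxA : x ∈ A := Algebra.subset_adjoin ⟨g₀, hg₀G, rfl⟩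
  have hyA : y ∈ A := Algebra.subset_adjoin ⟨h, hhG, rfl⟩
  have hnA : n ∈ A := sub_mem (mul_mem hxA hyA) (mul_mem hyA hxA)
  set c : ℂ := (lam - lam⁻¹) * ((Pinv * y * P) 0 1) with hc
  have hll : lam - lam⁻¹ ≠ 0 := by
    intro hll
    apply hl2
    have : lam = lam⁻¹ := by linear_combination hll
    have := congrArg (fun z => z * lam) this
    rw [inv_mul_cancel₀ hl0] at this
    rw [pow_two, this]
  have hcne : c ≠ 0 := mul_ne_zero hll hb
  -- conjugate of n
  have hnconj : Pinv * n * P = !![0, c; 0, 0] := by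
    rw [hn, Matrix.mul_sub, Matrix.sub_mul]
    rw [show Pinv * (x * y) * P = (Pinv * x * P) * (Pinv * y * P) from conj_mul' _ _ hPPinv x y]
    rw [show Pinv * (y * x) * P = (Pinv * y * P) * (Pinv * x * P) from conj_mul' _ _ hPPinv y x]
    rw [hg₀, commD lam (Pinv * y * P) (htri h hhG).1, ← hc]
  -- linear independence of 1, x, n
  have hconjinj : Function.Injective (conjL P Pinv) := by
    intro X Y hXY
    have := congrArg (fun Z => P * Z * Pinv) hXY
    simpa only [conjL, LinearMap.coe_mk, AddHom.coe_mk, conj_cancel P Pinv hPPinv] using this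
  have hc1 : (conjL P Pinv) 1 = 1 := by
    show Pinv * 1 * P = 1
    rw [Matrix.mul_one, hPinvP]
  have hli : LinearIndependent ℝ ![(1:M2), x, n] := by
    apply LinearIndependent.of_comp (conjL P Pinv)
    have hcomp : (conjL P Pinv) ∘ ![(1:M2), x, n] = ![1, !![lam,0;0,lam⁻¹], !![0,c;0,0]] := by
      funext i
      fin_cases i
      · exact hc1
      · exact hg₀
      · exact hnconj
    rw [hcomp]
    rw [Fintype.linearIndependent_iff]
    intro r hr
    rw [Fin.sum_univ_three] at hr
    simp only [Matrix.cons_val_zero, Matrix.cons_val_one, Matrix.head_cons,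
      Matrix.cons_val_two, Matrix.tail_cons] at hr
    have e00 := congrFun (congrFun hr 0) 0
    have e11 := congrFun (congrFun hr 1) 1
    have e01 := congrFun (congrFun hr 0) 1
    simp only [Matrix.add_apply, Matrix.smul_apply, Matrix.one_apply, Matrix.zero_apply,
      Matrix.cons_val', Matrix.cons_val_zero, Matrix.cons_val_one, Matrix.head_cons,
      Matrix.head_fin_const, Matrix.empty_val', Matrix.cons_val_fin_one, Matrix.of_apply,
      Complex.real_smul, if_true, if_false, one_ne_zero, zero_ne_one, reduceIte,
      mul_zero, mul_one, add_zero, zero_add, smul_zero] at e00 e11 e01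
    -- e00 : r 0 + r 1 * lam = 0 ; e11 : r 0 + r 1 * lam⁻¹ = 0 ; e01 : r 2 * c = 0
    have hr2 : (r 2 : ℂ) = 0 := by
      rcases mul_eq_zero.mp e01 with h' | h'
      · exact h'
      · exact absurd h' hcne
    have hr1 : (r 1 : ℂ) = 0 := by
      have h5 : (r 1 : ℂ) * (lam - lam⁻¹) = 0 := by linear_combination e00 - e11
      rcases mul_eq_zero.mp h5 with h' | h'
      · exact h'
      · exact absurd h' hll
    have hr0 : (r 0 : ℂ) = 0 := by linear_combination e00 - lam * hr1
    intro i
    fin_cases i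
    · exact_mod_cast hr0
    · exact_mod_cast hr1
    · exact_mod_cast hr2
  -- span equals the algebra
  have hsple : Submodule.span ℝ (Set.range ![(1:M2), x, n]) ≤ Subalgebra.toSubmodule A := by
    rw [Submodule.span_le]
    rintro z ⟨i, rfl⟩
    fin_cases i
    · exact one_mem A
    · exact hxA
    · exact hnA
  have hspfr : Module.finrank ℝ ↥(Submodule.span ℝ (Set.range ![(1:M2), x, n])) = 3 := by
    rw [finrank_span_eq_card hli]
    simp
  have hsp : Submodule.span ℝ (Set.range ![(1:M2), x, n]) = Subalgebra.toSubmodule A := by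
    apply Submodule.eq_of_le_of_finrank_le hsple
    rw [hspfr]
    exact le_of_eq hQ
  have hmem : ∀ z : M2, z ∈ A → ∃ r : Fin 3 → ℝ,
      (r 0 : ℂ) • (1:M2) + (r 1 : ℂ) • x + (r 2 : ℂ) • n = z := by
    intro z hz
    have : z ∈ Submodule.span ℝ (Set.range ![(1:M2), x, n]) := by
      rw [hsp]; exact hz
    rw [Submodule.mem_span_range_iff_exists_fun] at this
    obtain ⟨r, hr⟩ := this
    refine ⟨r, ?_⟩
    rw [Fin.sum_univ_three] at hr
    simp only [Matrix.cons_val_zero, Matrix.cons_val_one, Matrix.head_cons,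
      Matrix.cons_val_two, Matrix.tail_cons] at hr
    rw [← hr]
    simp [Complex.real_smul]
  -- apply to x * n  to show lam is real
  obtain ⟨s, hs⟩ := hmem (x * n) (mul_mem hxA hnA)
  have hsconj := congrArg (fun Z => Pinv * Z * P) hs
  simp only [Matrix.mul_add, Matrix.add_mul, Matrix.mul_smul, Matrix.smul_mul] at hsconj
  rw [show Pinv * (x * n) * P = (Pinv * x * P) * (Pinv * n * P) from conj_mul' _ _ hPPinv x n]
    at hsconj
  rw [Matrix.mul_one, hPinvP, hg₀, hnconj] at hsconj
  have hlam_eq : lam = (s 2 : ℂ) := by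
    have e01 := congrFun (congrFun hsconj 0) 1
    simp only [Matrix.add_apply, Matrix.smul_apply, Matrix.one_apply, Matrix.mul_apply,
      Fin.sum_univ_two, Matrix.cons_val', Matrix.cons_val_zero, Matrix.cons_val_one,
      Matrix.head_cons, Matrix.head_fin_const, Matrix.empty_val', Matrix.cons_val_fin_one,
      Matrix.of_apply, zero_ne_one, reduceIte, mul_zero, mul_one, add_zero, zero_add,
      smul_zero, zero_mul] at e01
    -- e01 : s 2 • c = lam * c
    have : ((s 2 : ℂ) - lam) * c = 0 := by
      rw [smul_eq_mul] at e01
      linear_combination e01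
    rcases mul_eq_zero.mp this with h' | h'
    · linear_combination -h'
    · exact absurd h' hcne
  -- now build T
  refine ⟨P * !![c, 0; 0, 1], ?_, ?_⟩
  · have hdP : IsUnit P.det := by
      apply IsUnit.of_mul_eq_one Pinv.det
      rw [← Matrix.det_mul, hPPinv, Matrix.det_one]
    rw [Matrix.det_mul]
    apply hdP.mul
    rw [Matrix.det_fin_two_of]
    simpa using hcne
  · intro g hg
    have hTinv : (P * !![c, 0; 0, 1])⁻¹ = !![c⁻¹, 0; 0, 1] * Pinv := by
      apply Matrix.inv_eq_right_inv
      calc P * !![c, 0; 0, 1] * (!![c⁻¹, 0; 0, 1] * Pinv)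
          = P * (!![c, 0; 0, 1] * !![c⁻¹, 0; 0, 1]) * Pinv := by
            simp only [Matrix.mul_assoc]
        _ = 1 := by
            have : (!![c, 0; 0, 1] : M2) * !![c⁻¹, 0; 0, 1] = 1 := by
              ext i j
              fin_cases i <;> fin_cases j <;>
                simp [Matrix.mul_apply, Fin.sum_univ_two, mul_inv_cancel₀ hcne]
            rw [this, Matrix.mul_one, hPPinv]
    have hkey : (P * !![c, 0; 0, 1])⁻¹ * (↑g : M2) * (P * !![c, 0; 0, 1]) =
        !![c⁻¹, 0; 0, 1] * (Pinv * (↑g : M2) * P) * !![c, 0; 0, 1] := by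
      rw [hTinv]
      simp only [Matrix.mul_assoc]
    rw [hkey, diagConj c hcne]
    obtain ⟨r, hr⟩ := hmem (↑g) (Algebra.subset_adjoin ⟨g, hg, rfl⟩)
    have hrconj := congrArg (fun Z => Pinv * Z * P) hr
    simp only [Matrix.mul_add, Matrix.add_mul, Matrix.mul_smul, Matrix.smul_mul] at hrconj
    rw [Matrix.mul_one, hPinvP, hg₀, hnconj] at hrconj
    -- entries of Pinv g P
    have e00 := congrFun (congrFun hrconj 0) 0
    have e01 := congrFun (congrFun hrconj 0) 1
    have e10 := congrFun (congrFun hrconj 1) 0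
    have e11 := congrFun (congrFun hrconj 1) 1
    simp only [Matrix.add_apply, Matrix.smul_apply, Matrix.one_apply,
      Matrix.cons_val', Matrix.cons_val_zero, Matrix.cons_val_one, Matrix.head_cons,
      Matrix.head_fin_const, Matrix.empty_val', Matrix.cons_val_fin_one, Matrix.of_apply,
      zero_ne_one, one_ne_zero, reduceIte, mul_zero, mul_one, add_zero, zero_add,
      smul_zero, Complex.real_smul, smul_eq_mul] at e00 e01 e10 e11
    -- e00 : r0 + r1 * lam = M00 ; e01 : r2 * c = M01 ; e10 : 0 = M10 ; e11 : r0 + r1*lam⁻¹ = M11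
    refine ⟨?_, ?_, ?_⟩
    · intro i j
      fin_cases i <;> fin_cases j <;>
        simp only [Fin.zero_eta, Fin.mk_one, Matrix.cons_val', Matrix.cons_val_zero,
          Matrix.cons_val_one, Matrix.head_cons, Matrix.head_fin_const, Matrix.empty_val',
          Matrix.cons_val_fin_one, Matrix.of_apply]
      · rw [← e00, hlam_eq]
        simp [Complex.add_im, Complex.mul_im]
      · rw [← e01]
        have hcc : c⁻¹ * (((r 2 : ℝ) : ℂ) * c) = ((r 2 : ℝ) : ℂ) := by
          field_simp
        rw [hcc]
        exact Complex.ofReal_im _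
      · rw [← e10]
        simp
      · rw [← e11, hlam_eq, ← Complex.ofReal_inv]
        simp [Complex.add_im, Complex.mul_im]
    · rw [← e10]
      simp
    · rw [Matrix.det_fin_two_of]
      rw [← e10]
      rw [mul_zero, mul_zero, sub_zero]
      exact (htri g hg).2

end Auxiliary

/-- A non-abelian, reducible subgroup of `SL(2,ℂ)` is unitary iff the real algebra it
generates has dimension 3, equivalently iff it is conjugate to a subgroup of the real
upper-triangular matrices of determinant 1. -/
theorem nonabelian_reducible_unitary_iff_dim_three
    (G : Subgroup (Matrix.SpecialLinearGroup (Fin 2) ℂ))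
    (hnab : ¬ ∀ a ∈ G, ∀ b ∈ G, a * b = b * a)
    (hred : IsReducibleSubgroup G) :
    (IsUnitarySubgroup G ↔
      Module.finrank ℝ
        (Algebra.adjoin ℝ
          ((fun g : Matrix.SpecialLinearGroup (Fin 2) ℂ => (g : Matrix (Fin 2) (Fin 2) ℂ)) ''
            (G : Set (Matrix.SpecialLinearGroup (Fin 2) ℂ)))) = 3) ∧
    (IsUnitarySubgroup G ↔
      ∃ T : Matrix (Fin 2) (Fin 2) ℂ, IsUnit T.det ∧
        ∀ g ∈ G,
          (∀ i j, ((T⁻¹ * (g : Matrix (Fin 2) (Fin 2) ℂ) * T) i j).im = 0) ∧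
          (T⁻¹ * (g : Matrix (Fin 2) (Fin 2) ℂ) * T) 1 0 = 0 ∧
          (T⁻¹ * (g : Matrix (Fin 2) (Fin 2) ℂ) * T).det = 1) := by
  obtain ⟨P, Pinv, hPPinv, hPinvP, lam, hl0, hl2, ⟨g₀, hg₀G, hg₀⟩, htri, hex⟩ :=
    lemA G hnab hred
  have hPR : IsUnitarySubgroup G → ∃ T : Matrix (Fin 2) (Fin 2) ℂ, IsUnit T.det ∧
      ∀ g ∈ G,
        (∀ i j, ((T⁻¹ * (g : Matrix (Fin 2) (Fin 2) ℂ) * T) i j).im = 0) ∧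
        (T⁻¹ * (g : Matrix (Fin 2) (Fin 2) ℂ) * T) 1 0 = 0 ∧
        (T⁻¹ * (g : Matrix (Fin 2) (Fin 2) ℂ) * T).det = 1 :=
    fun hU => PtoR G P Pinv hPPinv hPinvP lam hl0 hl2 g₀ hg₀G hg₀ htri hex hU
  have hRP := RtoP G
  have hQR := QtoR G P Pinv hPPinv hPinvP lam hl0 hl2 g₀ hg₀G hg₀ htri hex
  have hRQ : (∃ T : Matrix (Fin 2) (Fin 2) ℂ, IsUnit T.det ∧
      ∀ g ∈ G,
        (∀ i j, ((T⁻¹ * (g : Matrix (Fin 2) (Fin 2) ℂ) * T) i j).im = 0) ∧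
        (T⁻¹ * (g : Matrix (Fin 2) (Fin 2) ℂ) * T) 1 0 = 0 ∧
        (T⁻¹ * (g : Matrix (Fin 2) (Fin 2) ℂ) * T).det = 1) →
      Module.finrank ℝ
        (Algebra.adjoin ℝ
          ((fun g : Matrix.SpecialLinearGroup (Fin 2) ℂ => (g : Matrix (Fin 2) (Fin 2) ℂ)) ''
            (G : Set (Matrix.SpecialLinearGroup (Fin 2) ℂ)))) = 3 :=
    fun hR => le_antisymm (dim_le G hR) (dim_ge G hnab)
  exact ⟨⟨fun hU => hRQ (hPR hU), fun hQ => hRP (hQR hQ)⟩, ⟨hPR, hRP⟩⟩
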